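/- If ρ and ρ' are fractional q-partitions of [0,1] (measurable functions ρ_i : [0,1] → [0,1] with ∑_{i=1}^q ρ_i(x) = 1 for all x), then |Ent(ρ) - Ent(ρ')| ≤ q · f̃(d₁(ρ,ρ')/q), where Ent(ρ) = ∫₀¹ ∑_i (-ρ_i(x) log ρ_i(x)) dx, d₁(ρ,ρ') = ∑_i ∫₀¹ |ρ_i(x) - ρ'_i(x)| dx, and f̃(t) = t(1 - log t) with f̃(0)=0. -/

import Mathlib

open MeasureTheory

/-- A fractional `q`-partition of `[0,1]`: measurable functions with values in `[0,1]`
summing pointwise to `1`. -/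
def IsFracPartition (q : ℕ) (ρ : Fin q → ℝ → ℝ) : Prop :=
  (∀ i, Measurable (ρ i)) ∧ (∀ i x, ρ i x ∈ Set.Icc (0:ℝ) 1) ∧
    (∀ x, ∑ i, ρ i x = 1)

/-- Entropy of a fractional partition: `∫₀¹ ∑ᵢ -ρᵢ(x) log ρᵢ(x) dx`. -/
noncomputable def Ent (q : ℕ) (ρ : Fin q → ℝ → ℝ) : ℝ :=
  ∫ x in Set.Icc (0:ℝ) 1, ∑ i, -(ρ i x) * Real.log (ρ i x)

/-- `L¹` distance between fractional partitions. -/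
noncomputable def d1FP (q : ℕ) (ρ ρ' : Fin q → ℝ → ℝ) : ℝ :=
  ∑ i, ∫ x in Set.Icc (0:ℝ) 1, |ρ i x - ρ' i x|

noncomputable def ftl (t : ℝ) : ℝ := t * (1 - Real.log t)

lemma ftl_tangent {s t : ℝ} (hs : 0 ≤ s) (ht : 0 < t) :
    ftl s ≤ ftl t - Real.log t * (s - t) := by
  unfold ftl
  rcases eq_or_lt_of_le hs with h | h
  · rw [← h]
    simp only [Real.log_zero]
    nlinarith
  · have hlog := Real.log_le_sub_one_of_pos (div_pos ht h)
    rw [Real.log_div ht.ne' h.ne'] at hlog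
    have hts : s * (t / s) = t := by field_simp
    nlinarith [mul_le_mul_of_nonneg_left hlog h.le]

lemma ftl_nonneg {s : ℝ} (h0 : 0 ≤ s) (h1 : s ≤ 1) : 0 ≤ ftl s := by
  have := Real.log_nonpos h0 h1
  unfold ftl; nlinarith

lemma ftl_le_one {s : ℝ} (h0 : 0 ≤ s) : ftl s ≤ 1 := by
  have := ftl_tangent h0 one_pos
  simpa [ftl] using this

lemma nml_diff_le {a b : ℝ} (hb : 0 ≤ b) (hba : b ≤ a) (ha : a ≤ 1) :
    (-a * Real.log a) - (-b * Real.log b) ≤ ftl (a - b) := by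
  set t := a - b with hts
  have ht0 : 0 ≤ t := by simp only [hts]; linarith
  have hab : a = b + t := by rw [hts]; ring
  rcases eq_or_lt_of_le ht0 with h | h
  · have hba' : a = b := by simp only [hts] at h; linarith
    simp [hba', ← h, ftl]
  · have ha0 : 0 < a := by linarith
    have h1 : b * Real.log b ≤ b * Real.log a := by
      rcases eq_or_lt_of_le hb with hb0 | hb0
      · rw [← hb0]; simp
      · exact mul_le_mul_of_nonneg_left (Real.log_le_log hb0 hba) hb
    have h2 : t * Real.log t ≤ t * Real.log a :=
      mul_le_mul_of_nonneg_left (Real.log_le_log h (by linarith)) ht0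
    have key : -a * Real.log a = -b * Real.log a - t * Real.log a := by
      rw [hab]; ring
    have hr : ftl t = t - t * Real.log t := by unfold ftl; ring
    rw [hr]
    linarith

lemma nml_diff_le' {a b : ℝ} (hb : 0 ≤ b) (hba : b ≤ a) (ha : a ≤ 1) :
    (-b * Real.log b) - (-a * Real.log a) ≤ ftl (a - b) := by
  set t := a - b with hts
  have ht0 : 0 ≤ t := by simp only [hts]; linarith
  have hab : a = b + t := by rw [hts]; ring
  rcases eq_or_lt_of_le ht0 with h | h
  · have hba' : a = b := by simp only [hts] at h; linarith
    simp [hba', ← h, ftl]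
  · have ha0 : 0 < a := by linarith
    have hloga : Real.log a ≤ 0 := Real.log_nonpos ha0.le ha
    have hlogt : t * Real.log t ≤ 0 :=
      mul_nonpos_of_nonneg_of_nonpos ht0 (Real.log_nonpos ht0 (by linarith))
    have h1 : b * Real.log a - b * Real.log b ≤ t := by
      rcases eq_or_lt_of_le hb with hb0 | hb0
      · rw [← hb0]; simp [h.le]
      · have hd := Real.log_le_sub_one_of_pos (div_pos ha0 hb0)
        rw [Real.log_div ha0.ne' hb0.ne'] at hd
        have : b * (a / b) = a := by field_simp
        nlinarith [mul_le_mul_of_nonneg_left hd hb]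
    have key : a * Real.log a = b * Real.log a + t * Real.log a := by
      rw [hab]; ring
    have htla : t * Real.log a ≤ 0 := mul_nonpos_of_nonneg_of_nonpos ht0 hloga
    have hr : ftl t = t - t * Real.log t := by unfold ftl; ring
    rw [hr]
    linarith

lemma nml_abs_le {a b : ℝ} (ha : a ∈ Set.Icc (0:ℝ) 1) (hb : b ∈ Set.Icc (0:ℝ) 1) :
    |(-a * Real.log a) - (-b * Real.log b)| ≤ ftl |a - b| := by
  rcases le_total b a with h | h
  · rw [abs_of_nonneg (by linarith : (0:ℝ) ≤ a - b)]
    exact abs_sub_le_iff.2 ⟨nml_diff_le hb.1 h ha.2, nml_diff_le' hb.1 h ha.2⟩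
  · rw [abs_sub_comm a b, abs_of_nonneg (by linarith : (0:ℝ) ≤ b - a), abs_sub_comm]
    exact abs_sub_le_iff.2 ⟨nml_diff_le ha.1 h hb.2, nml_diff_le' ha.1 h hb.2⟩

lemma nml_mem {a : ℝ} (h : a ∈ Set.Icc (0:ℝ) 1) : -a * Real.log a ∈ Set.Icc (0:ℝ) 1 := by
  have hl : Real.log a ≤ 0 := Real.log_nonpos h.1 h.2
  have h1 : ftl a ≤ 1 := ftl_le_one h.1
  constructor
  · nlinarith [h.1]
  · have : ftl a = a - a * Real.log a := by unfold ftl; ring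
    nlinarith [h.1]

lemma intOn {f : ℝ → ℝ} (hf : Measurable f) {C : ℝ} (h : ∀ x, |f x| ≤ C) :
    IntegrableOn f (Set.Icc (0:ℝ) 1) := by
  refine Integrable.mono' (g := fun _ => C) ?_ hf.aestronglyMeasurable
    (ae_of_all _ (fun x => by simpa using h x))
  exact integrableOn_const measure_Icc_lt_top.ne


/-- `|Ent ρ - Ent ρ'| ≤ q · f̃(d₁(ρ,ρ')/q)` where `f̃(t) = t(1 - log t)`. -/
theorem stmt2 (q : ℕ) (ρ ρ' : Fin q → ℝ → ℝ)
    (hρ : IsFracPartition q ρ) (hρ' : IsFracPartition q ρ') :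
    |Ent q ρ - Ent q ρ'| ≤
      q * ((d1FP q ρ ρ' / q) * (1 - Real.log (d1FP q ρ ρ' / q))) := by
  obtain ⟨hm, hv, -⟩ := hρ
  obtain ⟨hm', hv', -⟩ := hρ'
  rcases Nat.eq_zero_or_pos q with hq | hq
  · subst hq; simp [Ent]
  have hqR : (0:ℝ) < q := by exact_mod_cast hq
  -- abbreviations
  set D := d1FP q ρ ρ' with hDdef
  -- basic pointwise facts
  have hΔ : ∀ i x, |ρ i x - ρ' i x| ∈ Set.Icc (0:ℝ) 1 := by
    intro i x
    refine ⟨abs_nonneg _, ?_⟩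
    have h1 := hv i x; have h2 := hv' i x
    rw [abs_le]; constructor <;> [linarith [h1.1, h2.2]; linarith [h1.2, h2.1]]
  -- measurability
  have mF : Measurable fun x => ∑ i, -(ρ i x) * Real.log (ρ i x) :=
    Finset.measurable_sum _ (fun i _ => ((hm i).neg.mul (Real.measurable_log.comp (hm i))))
  have mF' : Measurable fun x => ∑ i, -(ρ' i x) * Real.log (ρ' i x) :=
    Finset.measurable_sum _ (fun i _ => ((hm' i).neg.mul (Real.measurable_log.comp (hm' i))))
  have mD : ∀ i, Measurable fun x => |ρ i x - ρ' i x| :=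
    fun i => ((hm i).sub (hm' i)).abs
  have mG : ∀ i, Measurable fun x => ftl |ρ i x - ρ' i x| := by
    intro i
    unfold ftl
    exact (mD i).mul (measurable_const.sub (Real.measurable_log.comp (mD i)))
  -- integrability
  have hIF : IntegrableOn (fun x => ∑ i, -(ρ i x) * Real.log (ρ i x)) (Set.Icc (0:ℝ) 1) := by
    refine intOn mF (C := q) (fun x => ?_)
    calc |∑ i, -(ρ i x) * Real.log (ρ i x)| ≤ ∑ i, |(-(ρ i x)) * Real.log (ρ i x)| :=
          Finset.abs_sum_le_sum_abs _ _
      _ ≤ ∑ _i : Fin q, (1:ℝ) := Finset.sum_le_sum (fun i _ => by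
          have := nml_mem (hv i x)
          rw [abs_of_nonneg (by simpa using this.1)]
          simpa using this.2)
      _ = q := by simp
  have hIF' : IntegrableOn (fun x => ∑ i, -(ρ' i x) * Real.log (ρ' i x)) (Set.Icc (0:ℝ) 1) := by
    refine intOn mF' (C := q) (fun x => ?_)
    calc |∑ i, -(ρ' i x) * Real.log (ρ' i x)| ≤ ∑ i, |(-(ρ' i x)) * Real.log (ρ' i x)| :=
          Finset.abs_sum_le_sum_abs _ _
      _ ≤ ∑ _i : Fin q, (1:ℝ) := Finset.sum_le_sum (fun i _ => by
          have := nml_mem (hv' i x)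
          rw [abs_of_nonneg (by simpa using this.1)]
          simpa using this.2)
      _ = q := by simp
  have hID : ∀ i, IntegrableOn (fun x => |ρ i x - ρ' i x|) (Set.Icc (0:ℝ) 1) := by
    intro i
    exact intOn (mD i) (C := 1) (fun x => by rw [abs_abs]; exact (hΔ i x).2)
  have hIG : ∀ i, IntegrableOn (fun x => ftl |ρ i x - ρ' i x|) (Set.Icc (0:ℝ) 1) := by
    intro i
    refine intOn (mG i) (C := 1) (fun x => ?_)
    rw [abs_of_nonneg (ftl_nonneg (hΔ i x).1 (hΔ i x).2)]
    exact ftl_le_one (hΔ i x).1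
  -- Step 1
  have step1 : |Ent q ρ - Ent q ρ'| ≤ ∑ i, ∫ x in Set.Icc (0:ℝ) 1, ftl |ρ i x - ρ' i x| := by
    rw [Ent, Ent, ← integral_sub hIF hIF']
    calc |∫ x in Set.Icc (0:ℝ) 1, ((∑ i, -(ρ i x) * Real.log (ρ i x)) -
            ∑ i, -(ρ' i x) * Real.log (ρ' i x))|
        ≤ ∫ x in Set.Icc (0:ℝ) 1, |(∑ i, -(ρ i x) * Real.log (ρ i x)) -
            ∑ i, -(ρ' i x) * Real.log (ρ' i x)| := by
          simpa using norm_integral_le_integral_norm (μ := volume.restrict (Set.Icc (0:ℝ) 1))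
            (fun x => (∑ i, -(ρ i x) * Real.log (ρ i x)) - ∑ i, -(ρ' i x) * Real.log (ρ' i x))
      _ ≤ ∫ x in Set.Icc (0:ℝ) 1, ∑ i, ftl |ρ i x - ρ' i x| := by
          refine integral_mono (hIF.sub hIF').abs (integrable_finset_sum _ (fun i _ => hIG i))
            (fun x => ?_)
          rw [← Finset.sum_sub_distrib]
          calc |∑ i, ((-(ρ i x)) * Real.log (ρ i x) - (-(ρ' i x)) * Real.log (ρ' i x))|
              ≤ ∑ i, |(-(ρ i x)) * Real.log (ρ i x) - (-(ρ' i x)) * Real.log (ρ' i x)| :=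
                Finset.abs_sum_le_sum_abs _ _
            _ ≤ ∑ i, ftl |ρ i x - ρ' i x| := Finset.sum_le_sum (fun i _ => by
                  simpa using nml_abs_le (hv i x) (hv' i x))
      _ = ∑ i, ∫ x in Set.Icc (0:ℝ) 1, ftl |ρ i x - ρ' i x| :=
          integral_finset_sum _ (fun i _ => hIG i)
  have hDi : ∀ i, 0 ≤ ∫ x in Set.Icc (0:ℝ) 1, |ρ i x - ρ' i x| :=
    fun i => integral_nonneg (fun x => abs_nonneg _)
  have hD0 : 0 ≤ D := Finset.sum_nonneg (fun i _ => hDi i)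
  rcases eq_or_lt_of_le hD0 with hD | hD
  · -- D = 0 case
    have hzero : ∀ i, ∫ x in Set.Icc (0:ℝ) 1, |ρ i x - ρ' i x| = 0 := by
      intro i
      have := (Finset.sum_eq_zero_iff_of_nonneg (fun i _ => hDi i)).1 hD.symm
      exact this i (Finset.mem_univ i)
    have hGzero : ∀ i, ∫ x in Set.Icc (0:ℝ) 1, ftl |ρ i x - ρ' i x| = 0 := by
      intro i
      have hae : (fun x => |ρ i x - ρ' i x|) =ᵐ[volume.restrict (Set.Icc (0:ℝ) 1)] 0 :=
        (integral_eq_zero_iff_of_nonneg (fun x => abs_nonneg _) (hID i)).1 (hzero i)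
      have : (fun x => ftl |ρ i x - ρ' i x|) =ᵐ[volume.restrict (Set.Icc (0:ℝ) 1)] 0 := by
        filter_upwards [hae] with x hx
        simp only [Pi.zero_apply] at hx ⊢
        rw [hx]; simp [ftl]
      exact integral_eq_zero_of_ae this
    rw [← hD]
    simp only [zero_div, Real.log_zero, zero_mul, mul_zero]
    calc |Ent q ρ - Ent q ρ'| ≤ ∑ i, ∫ x in Set.Icc (0:ℝ) 1, ftl |ρ i x - ρ' i x| := step1
      _ = 0 := by simp [hGzero]
      _ ≤ _ := by simp
  · -- D > 0 case
    set t := D / q with htdef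
    have ht : 0 < t := div_pos hD hqR
    have hμ : ((volume : Measure ℝ) (Set.Icc (0:ℝ) 1)).toReal = 1 := by
      rw [Real.volume_Icc]; norm_num
    have key : ∀ i, ∫ x in Set.Icc (0:ℝ) 1, ftl |ρ i x - ρ' i x| ≤
        (ftl t + Real.log t * t) - Real.log t * ∫ x in Set.Icc (0:ℝ) 1, |ρ i x - ρ' i x| := by
      intro i
      have hpt : ∀ x, ftl |ρ i x - ρ' i x| ≤
          (ftl t + Real.log t * t) - Real.log t * |ρ i x - ρ' i x| := by
        intro x
        have := ftl_tangent (abs_nonneg (ρ i x - ρ' i x)) ht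
        linarith
      calc ∫ x in Set.Icc (0:ℝ) 1, ftl |ρ i x - ρ' i x|
          ≤ ∫ x in Set.Icc (0:ℝ) 1,
              ((ftl t + Real.log t * t) - Real.log t * |ρ i x - ρ' i x|) := by
            refine integral_mono (hIG i) ?_ hpt
            exact (integrableOn_const measure_Icc_lt_top.ne).sub ((hID i).const_mul _)
        _ = (ftl t + Real.log t * t) - Real.log t * ∫ x in Set.Icc (0:ℝ) 1, |ρ i x - ρ' i x| := by
            rw [integral_sub (integrableOn_const measure_Icc_lt_top.ne :
                IntegrableOn (fun _ => ftl t + Real.log t * t) (Set.Icc (0:ℝ) 1) volume)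
              ((hID i).const_mul (Real.log t) :
                IntegrableOn (fun x => Real.log t * |ρ i x - ρ' i x|) (Set.Icc (0:ℝ) 1) volume),
              integral_const, integral_const_mul]
            simp [hμ]
    have sum_le : ∑ i, ∫ x in Set.Icc (0:ℝ) 1, ftl |ρ i x - ρ' i x| ≤
        q * (ftl t + Real.log t * t) - Real.log t * D := by
      calc ∑ i, ∫ x in Set.Icc (0:ℝ) 1, ftl |ρ i x - ρ' i x|
          ≤ ∑ i, ((ftl t + Real.log t * t) -
              Real.log t * ∫ x in Set.Icc (0:ℝ) 1, |ρ i x - ρ' i x|) :=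
            Finset.sum_le_sum (fun i _ => key i)
        _ = q * (ftl t + Real.log t * t) - Real.log t * D := by
            rw [Finset.sum_sub_distrib, Finset.sum_const, ← Finset.mul_sum, hDdef, d1FP]
            simp only [Finset.card_univ, Fintype.card_fin, nsmul_eq_mul]
    have hqt : (q:ℝ) * t = D := by rw [htdef]; field_simp
    have final : q * (ftl t + Real.log t * t) - Real.log t * D = q * (t * (1 - Real.log t)) := by
      unfold ftl
      linear_combination Real.log t * hqt
    calc |Ent q ρ - Ent q ρ'| ≤ ∑ i, ∫ x in Set.Icc (0:ℝ) 1, ftl |ρ i x - ρ' i x| := step1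
      _ ≤ q * (ftl t + Real.log t * t) - Real.log t * D := sum_le
      _ = q * (t * (1 - Real.log t)) := final
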